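/- Let M be an EPIR transaction fee mechanism whose payment and burning rules are separable (for each i, the payment p_i and burn β_i of an allocated bid b_i depend only on b_i, and an unallocated bid pays and burns 0), and whose intended allocation rule is revenue-maximizing for the miner: for every bid vector b, the intended allocation maximizes ∑_i α_i·(p_i(b_i) − β_i(b_i)) over all feasible allocations α (at most B bids allocated). Then M is MMIC: no miner can strictly increase its utility by deviating from the intended allocation or by adding fake bids of its own. -/

import Mathlib

/-- Consider an EPIR TFM with block size `B` whose payment and burning
rules are separable: bidder `i`, when allocated, pays `P i (b i)` and burns `Q i (b i)`
(both depending only on its own bid), and pays and burns `0` when unallocated.  If the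
intended allocation rule `x` is revenue-maximizing for the miner — for every bid vector
it maximizes `∑ i, αᵢ ⬝ (P i (b i) − Q i (b i))` over all feasible allocations `α`
(allocating at most `B` bids) — then the mechanism is MMIC: the miner cannot strictly
increase its utility by deviating from the intended allocation or by injecting fake bids
of its own. -/
theorem separable_revenue_maximizing_implies_mmic
    (B : ℕ∞)
    (x : ∀ n : ℕ, (Fin n → ℝ) → Fin n → Bool)
    (P Q : ℕ → ℝ → ℝ)
    (hP_nonneg : ∀ (i : ℕ) (t : ℝ), 0 ≤ t → 0 ≤ P i t)
    (hQ_nonneg : ∀ (i : ℕ) (t : ℝ), 0 ≤ t → 0 ≤ Q i t)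
    (hx_feasible : ∀ (n : ℕ) (b : Fin n → ℝ),
      (((Finset.univ.filter fun i => x n b i = true).card : ℕ∞)) ≤ B)
    (hEPIR : ∀ (n : ℕ) (b : Fin n → ℝ), (∀ i, 0 ≤ b i) →
      ∀ i : Fin n, x n b i = true → P (i : ℕ) (b i) ≤ b i)
    (hRevMax : ∀ (n : ℕ) (b : Fin n → ℝ), (∀ i, 0 ≤ b i) →
      ∀ α : Fin n → Bool,
        (((Finset.univ.filter fun i => α i = true).card : ℕ∞)) ≤ B →
        (∑ i : Fin n, if α i then P (i : ℕ) (b i) - Q (i : ℕ) (b i) else 0)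
          ≤ ∑ i : Fin n, if x n b i then P (i : ℕ) (b i) - Q (i : ℕ) (b i) else 0) :
    -- MMIC: the miner's utility from any feasible allocation `α` of the real bids `b`
    -- together with any fake bids `f` (it pays the fees of its own allocated fake bids)
    -- is at most its utility from the intended allocation with no fake bids.
    ∀ (n : ℕ) (b : Fin n → ℝ), (∀ i, 0 ≤ b i) →
    ∀ (m : ℕ) (f : Fin m → ℝ), (∀ j, 0 ≤ f j) →
    ∀ α : Fin (n + m) → Bool,
      (((Finset.univ.filter fun i => α i = true).card : ℕ∞)) ≤ B →
      ((∑ i : Fin (n + m),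
          if α i then P (i : ℕ) (Fin.append b f i) - Q (i : ℕ) (Fin.append b f i) else 0)
        - ∑ j : Fin m,
            (if α (Fin.natAdd n j) then P ((Fin.natAdd n j : Fin (n + m)) : ℕ) (f j) else 0))
      ≤ ∑ i : Fin n, if x n b i then P (i : ℕ) (b i) - Q (i : ℕ) (b i) else 0 := by

  intro n b hb m f hf α hα
  -- split the big sum
  rw [Fin.sum_univ_add]
  simp only [Fin.append_left, Fin.append_right]
  set α' : Fin n → Bool := fun i => α (Fin.castAdd m i) with hα'
  have hcard : ((Finset.univ.filter fun i => α' i = true).card : ℕ∞) ≤ B := by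
    refine le_trans ?_ hα
    norm_cast
    apply Finset.card_le_card_of_injOn (fun i => Fin.castAdd m i)
    · intro i hi
      simp only [Finset.mem_coe, Finset.mem_filter, Finset.mem_univ, true_and] at hi ⊢
      exact hi
    · intro i _ j _ h
      exact Fin.castAdd_injective _ _ h
  have hmain := hRevMax n b hb α' hcard
  have hfake : (∑ j : Fin m,
        if α (Fin.natAdd n j) then
          P ((Fin.natAdd n j : Fin (n + m)) : ℕ) (f j) - Q ((Fin.natAdd n j : Fin (n + m)) : ℕ) (f j)
        else 0)
      - (∑ j : Fin m,
        if α (Fin.natAdd n j) then P ((Fin.natAdd n j : Fin (n + m)) : ℕ) (f j) else 0) ≤ 0 := by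
    rw [← Finset.sum_sub_distrib]
    apply Finset.sum_nonpos
    intro j _
    by_cases h : α (Fin.natAdd n j) = true
    · simp only [h, if_true]
      have := hQ_nonneg ((Fin.natAdd n j : Fin (n + m)) : ℕ) (f j) (hf j)
      linarith
    · simp only [h, if_false]
      norm_num
  have : (∑ i : Fin n,
      if α (Fin.castAdd m i) then P ((Fin.castAdd m i : Fin (n + m)) : ℕ) (b i)
        - Q ((Fin.castAdd m i : Fin (n + m)) : ℕ) (b i) else 0)
      = ∑ i : Fin n, if α' i then P (i : ℕ) (b i) - Q (i : ℕ) (b i) else 0 := by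
    apply Finset.sum_congr rfl
    intro i _
    simp [hα', Fin.coe_castAdd]
  linarith [hmain, hfake, this.ge, this.le]
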